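/- Let L be a finite lattice and f, g closure operators on L². A pair (ℓ, ℓ') ∈ L² satisfies: there exists ℓ'' with (ℓ, ℓ'') stable for (fg)^ω, (ℓ'', ℓ') stable for f, and (ℓ', ℓ'') stable for g — if and only if (ℓ, ℓ') is stable for f(gf)^{ω+*}. (Conjugated star theorem.) -/
import Mathlib


/-- Relational composition of binary relations on `α`. -/
def relComp {α : Type*} (f g : Set (α × α)) : Set (α × α) :=
  {p | ∃ z, (p.1, z) ∈ f ∧ (z, p.2) ∈ g}

/-- Powers of a binary relation, the diagonal being the zeroth power. -/
def relPow {α : Type*} (g : Set (α × α)) : ℕ → Set (α × α)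
  | 0 => {p | p.1 = p.2}
  | n + 1 => relComp (relPow g n) g

/-- Kleene star: the partial identity on the fixed-point set of the relation. -/
def relStar {α : Type*} (g : Set (α × α)) : Set (α × α) :=
  {p | p.1 = p.2 ∧ p ∈ g}

/-- A binary relation on a complete lattice is meet-closed if closed under
arbitrary coordinatewise meets. -/
def MeetClosedRel {α : Type*} [CompleteLattice α] (f : Set (α × α)) : Prop :=
  ∀ S : Set (α × α), S ⊆ f → sInf S ∈ f

theorem relComp_assoc {α : Type*} (a b c : Set (α × α)) :
    relComp (relComp a b) c = relComp a (relComp b c) := by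
  ext ⟨x, y⟩
  constructor
  · rintro ⟨z, ⟨w, hw1, hw2⟩, hz⟩
    exact ⟨w, hw1, z, hw2, hz⟩
  · rintro ⟨w, hw, z, hz1, hz2⟩
    exact ⟨z, ⟨w, hw, hz1⟩, hz2⟩

theorem relPow_add {α : Type*} (h : Set (α × α)) (a b : ℕ) :
    relPow h (a + b) = relComp (relPow h a) (relPow h b) := by
  induction b with
  | zero =>
    ext ⟨x, y⟩
    constructor
    · intro hx; exact ⟨y, hx, rfl⟩
    · rintro ⟨z, hz, (hzy : z = y)⟩; exact hzy ▸ hz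
  | succ n ih =>
    show relComp (relPow h (a + n)) h = _
    rw [ih, relComp_assoc]; rfl

theorem relPow_shift {α : Type*} (f g : Set (α × α)) (n : ℕ) :
    relComp (relPow (relComp f g) n) f = relComp f (relPow (relComp g f) n) := by
  induction n with
  | zero =>
    ext ⟨x, y⟩
    constructor
    · rintro ⟨z, (hz : x = z), hzy⟩; exact ⟨y, hz ▸ hzy, rfl⟩
    · rintro ⟨z, hz, (hzy : z = y)⟩; exact ⟨x, rfl, hzy ▸ hz⟩
  | succ n ih =>
    show relComp (relComp (relPow (relComp f g) n) (relComp f g)) f = _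
    rw [relComp_assoc, relComp_assoc, ← relComp_assoc (relPow (relComp f g) n) f,
      ih, relComp_assoc]
    rfl

theorem relPow_loop {α : Type*} (h : Set (α × α)) {x y : α} (hy : (y, y) ∈ h)
    {n : ℕ} (hx : (x, y) ∈ relPow h n) (k : ℕ) : (x, y) ∈ relPow h (n + k) := by
  induction k with
  | zero => exact hx
  | succ j ih => exact ⟨y, ih, hy⟩

/-- Conjugated star theorem.  Let `L` be a finite lattice and `f, g` closure
operators on `L²` (given by their meet-closed relations), with `(fg)^ω` and
`(gf)^ω` the respective idempotent powers (both equal to the `m`-th power).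
A pair `(ℓ, ℓ')` satisfies: there exists `ℓ''` with `(ℓ, ℓ'')` stable for
`(fg)^ω`, `(ℓ'', ℓ')` stable for `f`, and `(ℓ', ℓ'')` stable for `g` — if and
only if `(ℓ, ℓ')` is stable for `f (gf)^{ω+*}`, where
`(gf)^{ω+*} = (gf)^ω (gf)*`. -/
theorem conjugated_star (α : Type*) [CompleteLattice α] [Fintype α]
    (f g : Set (α × α)) (hf : MeetClosedRel f) (hg : MeetClosedRel g)
    (m : ℕ) (hm : 0 < m)
    (hfg : relComp (relPow (relComp f g) m) (relPow (relComp f g) m) =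
      relPow (relComp f g) m)
    (hgf : relComp (relPow (relComp g f) m) (relPow (relComp g f) m) =
      relPow (relComp g f) m)
    (ℓ ℓ' : α) :
    (∃ ℓ'' : α, (ℓ, ℓ'') ∈ relPow (relComp f g) m ∧ (ℓ'', ℓ') ∈ f ∧ (ℓ', ℓ'') ∈ g) ↔
      (ℓ, ℓ') ∈ relComp f (relComp (relPow (relComp g f) m) (relStar (relComp g f))) := by
  constructor
  · rintro ⟨c, hc1, hc2, hc3⟩
    have h1 : (ℓ, ℓ') ∈ relComp (relPow (relComp f g) m) f := ⟨c, hc1, hc2⟩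
    rw [relPow_shift] at h1
    obtain ⟨z, hz1, hz2⟩ := h1
    exact ⟨z, hz1, ℓ', hz2, rfl, c, hc3, hc2⟩
  · rintro ⟨z, hz, w, hw, (hweq : w = ℓ'), hloop⟩
    rw [hweq] at hw hloop
    obtain ⟨c, hc1, hc2⟩ := hloop
    have h1 : (ℓ, ℓ') ∈ relComp f (relPow (relComp g f) m) := ⟨z, hz, hw⟩
    rw [← relPow_shift] at h1
    obtain ⟨u, hu1, hu2⟩ := h1
    have h2 : (ℓ, c) ∈ relPow (relComp f g) (m + 1) := ⟨u, hu1, ℓ', hu2, hc1⟩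
    have hcc : (c, c) ∈ relComp f g := ⟨ℓ', hc2, hc1⟩
    have h3 := relPow_loop (relComp f g) hcc h2 (m - 1)
    have harith : m + 1 + (m - 1) = m + m := by omega
    rw [harith, relPow_add, hfg] at h3
    exact ⟨c, h3, hc2, hc1⟩
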